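/- Let U, U* ∈ ℝ^{d₁×r}, V, V* ∈ ℝ^{d₂×r} with M* = U*V*ᵀ and balanced optimal factors U*ᵀU* = V*ᵀV*, let ε ≥ 0, and suppose (U, V) satisfies the stationarity conditions (UVᵀ − M*)V = 0, (UVᵀ − M*)ᵀU = 0 and the balancedness bound ‖UᵀU − VᵀV‖_F ≤ ε. Let R ∈ ℝ^{r×r} be orthogonal, set Δ_U = U − U*R, Δ_V = V − V*R, and let W, W*, Δ be the vertical stackings of (U,V), (U*,V*), (Δ_U,Δ_V) respectively. If moreover ‖ΔΔᵀ‖_F² ≤ 2‖WWᵀ − W*W*ᵀ‖_F² (which holds when R is chosen as the orthogonal matrix minimizing ‖W − W*R‖_F), then ‖U Δ_Vᵀ + Δ_U Vᵀ‖_F² ≤ ‖UVᵀ − M*‖_F² + ε²/2. -/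
import Mathlib

open Matrix

noncomputable def frob {m n : Type*} [Fintype m] [Fintype n] (A : Matrix m n ℝ) : ℝ :=
  Real.sqrt (∑ i, ∑ j, A i j ^ 2)

namespace HCB

variable {a b c d : Type*} [Fintype a] [Fintype b] [Fintype c] [Fintype d]

noncomputable def fsq (A : Matrix a b ℝ) : ℝ := trace (Aᵀ * A)

lemma fsq_eq_sum (A : Matrix a b ℝ) : fsq A = ∑ i, ∑ j, A i j ^ 2 := by
  rw [fsq, trace]
  simp [Matrix.mul_apply, Matrix.diag, Matrix.transpose_apply, sq]
  exact Finset.sum_comm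

lemma fsq_nonneg (A : Matrix a b ℝ) : 0 ≤ fsq A := by
  rw [fsq_eq_sum]; positivity

lemma frob_sq (A : Matrix a b ℝ) : frob A ^ 2 = fsq A := by
  rw [frob, Real.sq_sqrt (by positivity), fsq_eq_sum]

lemma ip_comm (A B : Matrix a b ℝ) : trace (Aᵀ * B) = trace (Bᵀ * A) := by
  rw [← trace_transpose (Aᵀ * B), transpose_mul, transpose_transpose]

lemma fsq_sub (A B : Matrix a b ℝ) :
    fsq (A - B) = fsq A - 2 * trace (Aᵀ * B) + fsq B := by
  simp only [fsq, transpose_sub, Matrix.sub_mul, Matrix.mul_sub, trace_sub]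
  rw [ip_comm B A]; ring

lemma fsq_add (A B : Matrix a b ℝ) :
    fsq (A + B) = fsq A + 2 * trace (Aᵀ * B) + fsq B := by
  simp only [fsq, transpose_add, Matrix.add_mul, Matrix.mul_add, trace_add]
  rw [ip_comm B A]; ring

lemma fsq_transpose (A : Matrix a b ℝ) : fsq Aᵀ = fsq A := by
  rw [fsq, fsq, transpose_transpose, trace_mul_comm]

lemma rot4 (A : Matrix a b ℝ) (B : Matrix b c ℝ) (C : Matrix c d ℝ) (D : Matrix d a ℝ) :
    trace (A * (B * (C * D))) = trace (B * (C * (D * A))) := by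
  rw [trace_mul_comm]; simp only [Matrix.mul_assoc]

lemma trace_fromBlocks (A : Matrix a a ℝ) (B : Matrix a b ℝ) (C : Matrix b a ℝ)
    (D : Matrix b b ℝ) : trace (fromBlocks A B C D) = trace A + trace D := by
  simp [trace, Fintype.sum_sum_type, Matrix.diag, fromBlocks]

lemma fsq_fromBlocks (A : Matrix a b ℝ) (B : Matrix a c ℝ) (C : Matrix d b ℝ)
    (D : Matrix d c ℝ) :
    fsq (fromBlocks A B C D) = fsq A + fsq B + fsq C + fsq D := by
  rw [fsq, fromBlocks_transpose, fromBlocks_multiply, trace_fromBlocks]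
  simp only [trace_add, fsq]; ring

lemma key1 (X : Matrix a b ℝ) (Y : Matrix c b ℝ) :
    fsq (X * Yᵀ) = trace ((Xᵀ * X)ᵀ * (Yᵀ * Y)) := by
  rw [fsq]
  simp only [transpose_mul, transpose_transpose, Matrix.mul_assoc]
  exact rot4 Y Xᵀ X Yᵀ

lemma key2 (X : Matrix a b ℝ) (Y : Matrix c b ℝ) (Z : Matrix a d ℝ) (W : Matrix c d ℝ) :
    trace ((X * Yᵀ)ᵀ * (Z * Wᵀ)) = trace ((Xᵀ * Z)ᵀ * (Yᵀ * W)) := by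
  rw [← trace_transpose ((X * Yᵀ)ᵀ * (Z * Wᵀ))]
  simp only [transpose_mul, transpose_transpose, Matrix.mul_assoc]
  exact rot4 W Zᵀ X Yᵀ

end HCB

open HCB

/-- At a stationary point `(U,V)` of `½‖UVᵀ − M*‖_F²` with `M* = U*V*ᵀ`, balanced
optimal factors `U*ᵀU* = V*ᵀV*`, balancedness `‖UᵀU − VᵀV‖_F ≤ ε`, orthogonal `R`,
`Δ_U = U − U*R`, `Δ_V = V − V*R`, and `‖ΔΔᵀ‖_F² ≤ 2‖WWᵀ − W*W*ᵀ‖_F²`, one has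
`‖UΔ_Vᵀ + Δ_UVᵀ‖_F² ≤ ‖UVᵀ − M*‖_F² + ε²/2`. -/
theorem hessian_cross_term_bound {d₁ d₂ r : ℕ}
    (U Us : Matrix (Fin d₁) (Fin r) ℝ) (V Vs : Matrix (Fin d₂) (Fin r) ℝ)
    (ε : ℝ) (hε : 0 ≤ ε)
    (hbalopt : Usᵀ * Us = Vsᵀ * Vs)
    (hstat₁ : (U * Vᵀ - Us * Vsᵀ) * V = 0)
    (hstat₂ : (U * Vᵀ - Us * Vsᵀ)ᵀ * U = 0)
    (hbal : frob (Uᵀ * U - Vᵀ * V) ≤ ε)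
    (R : Matrix (Fin r) (Fin r) ℝ) (hR : R * Rᵀ = 1)
    (DU : Matrix (Fin d₁) (Fin r) ℝ) (DV : Matrix (Fin d₂) (Fin r) ℝ)
    (hDU : DU = U - Us * R) (hDV : DV = V - Vs * R)
    (hkey : frob (fromRows DU DV * (fromRows DU DV)ᵀ) ^ 2
              ≤ 2 * frob (fromRows U V * (fromRows U V)ᵀ
                          - fromRows Us Vs * (fromRows Us Vs)ᵀ) ^ 2) :
    frob (U * DVᵀ + DU * Vᵀ) ^ 2 ≤ frob (U * Vᵀ - Us * Vsᵀ) ^ 2 + ε ^ 2 / 2 := by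
  set E : Matrix (Fin d₁) (Fin d₂) ℝ := U * Vᵀ - Us * Vsᵀ with hE
  -- expansion of DU * DVᵀ
  have hRR : Us * R * (Vs * R)ᵀ = Us * Vsᵀ := by
    rw [transpose_mul, Matrix.mul_assoc, ← Matrix.mul_assoc R, hR, Matrix.one_mul]
  have hDD : DU * DVᵀ = U * Vᵀ - U * (Vs * R)ᵀ - Us * R * Vᵀ + Us * Vsᵀ := by
    rw [hDU, hDV, transpose_sub, Matrix.sub_mul, Matrix.mul_sub, Matrix.mul_sub, hRR]
    abel
  -- step 1 : U * DVᵀ + DU * Vᵀ = E + DU * DVᵀ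
  have hT : U * DVᵀ + DU * Vᵀ = E + DU * DVᵀ := by
    rw [hDD, hDU, hDV, transpose_sub, Matrix.mul_sub, Matrix.sub_mul, hE]
    abel
  -- step 2 : ⟨E, DU * DVᵀ⟩ = -‖E‖²
  have hip : trace (Eᵀ * (DU * DVᵀ)) = - trace (Eᵀ * E) := by
    have h1 : ∀ X : Matrix (Fin d₂) (Fin r) ℝ, trace (Eᵀ * (U * Xᵀ)) = 0 := by
      intro X
      rw [← Matrix.mul_assoc, hstat₂, Matrix.zero_mul, trace_zero]
    have h2 : trace (Eᵀ * (Us * R * Vᵀ)) = 0 := by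
      rw [trace_mul_comm, Matrix.mul_assoc, ← transpose_mul E V, hstat₁]
      simp
    have h3 : trace (Eᵀ * (Us * Vsᵀ)) = - trace (Eᵀ * E) := by
      have : Us * Vsᵀ = U * Vᵀ - E := by rw [hE]; abel
      rw [this, Matrix.mul_sub, trace_sub, h1 V]; ring
    rw [hDD]
    simp only [Matrix.mul_sub, Matrix.mul_add, trace_sub, trace_add, h1 V, h1 (Vs * R), h2, h3]
    ring
  -- step 3
  have hstep3 : frob (U * DVᵀ + DU * Vᵀ) ^ 2 = fsq (DU * DVᵀ) - fsq E := by
    rw [frob_sq, hT, fsq_add, hip, fsq]; ring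
  -- step 4
  set A' : Matrix (Fin r) (Fin r) ℝ := DUᵀ * DU with hA'
  set B' : Matrix (Fin r) (Fin r) ℝ := DVᵀ * DV with hB'
  have h41 : fsq (DU * DVᵀ) = trace (A'ᵀ * B') := key1 DU DV
  have h42 : fsq (DU * DUᵀ) = fsq A' := by
    rw [key1 DU DU, hA', fsq]
  have h43 : fsq (DV * DVᵀ) = fsq B' := by
    rw [key1 DV DV, hB', fsq]
  have h44 : 2 * trace (A'ᵀ * B') ≤ fsq A' + fsq B' := by
    have h := fsq_nonneg (A' - B')
    rw [fsq_sub] at h; linarith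
  have hblockD : fsq (fromRows DU DV * (fromRows DU DV)ᵀ)
      = fsq (DU * DUᵀ) + 2 * fsq (DU * DVᵀ) + fsq (DV * DVᵀ) := by
    rw [transpose_fromRows, fromRows_mul_fromCols, fsq_fromBlocks]
    have h : fsq (DV * DUᵀ) = fsq (DU * DVᵀ) := by
      rw [← fsq_transpose (DU * DVᵀ), transpose_mul, transpose_transpose]
    rw [h]; ring
  have h4 : 4 * fsq (DU * DVᵀ) ≤ fsq (fromRows DU DV * (fromRows DU DV)ᵀ) := by
    rw [hblockD, h42, h43, h41]; linarith
  -- step 6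
  have h6 : fsq (fromRows U V * (fromRows U V)ᵀ - fromRows Us Vs * (fromRows Us Vs)ᵀ)
      = fsq (U * Uᵀ - Us * Usᵀ) + 2 * fsq E + fsq (V * Vᵀ - Vs * Vsᵀ) := by
    have hsub : fromRows U V * (fromRows U V)ᵀ - fromRows Us Vs * (fromRows Us Vs)ᵀ
        = fromBlocks (U * Uᵀ - Us * Usᵀ) E Eᵀ (V * Vᵀ - Vs * Vsᵀ) := by
      rw [transpose_fromRows, transpose_fromRows, fromRows_mul_fromCols,
        fromRows_mul_fromCols, hE]
      ext (i | i) (j | j) <;>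
        simp [fromBlocks, Matrix.sub_apply, Matrix.transpose_apply, Matrix.mul_apply,
          mul_comm]
    rw [hsub, fsq_fromBlocks, fsq_transpose]; ring
  -- step 7
  have e1 : fsq (U * Uᵀ - Us * Usᵀ) + fsq (V * Vᵀ - Vs * Vsᵀ)
      + 2 * fsq (Uᵀ * Us - Vᵀ * Vs) = 2 * fsq E + fsq (Uᵀ * U - Vᵀ * V) := by
    rw [hE]
    rw [fsq_sub (U * Uᵀ), fsq_sub (V * Vᵀ), fsq_sub (Uᵀ * Us), fsq_sub (U * Vᵀ),
      fsq_sub (Uᵀ * U)]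
    rw [key1 U U, key1 V V, key1 Us Us, key1 Vs Vs, key1 U V, key1 Us Vs,
      key2 U U Us Us, key2 V V Vs Vs, key2 U V Us Vs]
    rw [hbalopt]
    simp only [fsq]
    ring
  -- put everything together
  have hfA := fsq_nonneg (Uᵀ * Us - Vᵀ * Vs)
  have hbal2 : fsq (Uᵀ * U - Vᵀ * V) ≤ ε ^ 2 := by
    rw [← frob_sq]
    exact pow_le_pow_left₀ (Real.sqrt_nonneg _) hbal 2
  rw [frob_sq, frob_sq] at hkey
  rw [hstep3, frob_sq]
  linarith
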